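/- arXiv:2407.17828 — 3 statements merged into one kernel-verified Lean document; each statement's English description precedes it below -/
import Mathlib

section
/- Let (E,d) be a metric space, T > 0, p ≥ 1, and let X : [0,T] → E be a continuous path of finite p-variation. Then there exist a continuous nondecreasing surjection φ : [0,T] → [0,T] and a continuous path X̃ : [0,T] → E such that X(t) = X̃(φ(t)) for all t ∈ [0,T], and X̃ has linear p-variation control: ‖X̃‖_{p-var;[0,t]}^p = (t/T)·‖X‖_{p-var;[0,T]}^p for all t ∈ [0,T]. (X̃ is called the Hölder-control reparameterisation of X.) -/
open Set Filter
open scoped ENNReal NNReal Topology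

/-- The `p`-variation of a path `f : ℝ → E` on the interval `[a, b]`. -/
noncomputable def pVar {E : Type*} [PseudoEMetricSpace E] (p : ℝ) (f : ℝ → E) (a b : ℝ) :
    ℝ≥0∞ :=
  ⨆ (n : ℕ) (t : Fin (n + 1) → ℝ) (_ : Monotone t) (_ : t 0 = a) (_ : t (Fin.last n) = b),
    (∑ i : Fin n, edist (f (t i.castSucc)) (f (t i.succ)) ^ p) ^ (1 / p)

namespace HCR

variable {E : Type*} [PseudoEMetricSpace E]

/-- sum of `p`-th powers of increments of `f` along the first `n` steps of `t`. -/
noncomputable def pvSum (p : ℝ) (f : ℝ → E) (t : ℕ → ℝ) (n : ℕ) : ℝ≥0∞ :=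
  ∑ i ∈ Finset.range n, edist (f (t i)) (f (t (i + 1))) ^ p

/-- partitions of `[a,b]`: a length `n` and a monotone map with `t 0 = a`, `t n = b`. -/
def Part (a b : ℝ) : Type :=
  {D : ℕ × (ℕ → ℝ) // Monotone D.2 ∧ D.2 0 = a ∧ D.2 D.1 = b}

noncomputable def pv (p : ℝ) (f : ℝ → E) (a b : ℝ) : ℝ≥0∞ :=
  ⨆ D : Part a b, pvSum p f D.1.2 D.1.1

lemma part_nonempty {a b : ℝ} (h : a ≤ b) : Nonempty (Part a b) := by
  refine ⟨⟨(1, fun i => if i = 0 then a else b), ?_, by simp, by simp⟩⟩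
  intro i j hij
  by_cases hi : i = 0 <;> by_cases hj : j = 0 <;> simp [hi, hj, h, le_refl] <;> omega

lemma le_pv {p : ℝ} {f : ℝ → E} {a b : ℝ} {t : ℕ → ℝ} {n : ℕ}
    (hmono : Monotone t) (h0 : t 0 = a) (hn : t n = b) :
    pvSum p f t n ≤ pv p f a b :=
  le_iSup (fun D : Part a b => pvSum p f D.1.2 D.1.1) ⟨(n, t), hmono, h0, hn⟩

lemma pv_le {p : ℝ} {f : ℝ → E} {a b : ℝ} {K : ℝ≥0∞}
    (h : ∀ (n : ℕ) (t : ℕ → ℝ), Monotone t → t 0 = a → t n = b → pvSum p f t n ≤ K) :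
    pv p f a b ≤ K :=
  iSup_le fun D => h D.1.1 D.1.2 D.2.1 D.2.2.1 D.2.2.2

lemma lt_pv {p : ℝ} {f : ℝ → E} {a b : ℝ} {c : ℝ≥0∞} (h : c < pv p f a b) :
    ∃ (n : ℕ) (t : ℕ → ℝ), Monotone t ∧ t 0 = a ∧ t n = b ∧ c < pvSum p f t n := by
  obtain ⟨D, hD⟩ := lt_iSup_iff.1 h
  exact ⟨D.1.1, D.1.2, D.2.1, D.2.2.1, ⟨D.2.2.2, hD⟩⟩

lemma pVar_rpow_eq {p : ℝ} (hp : 0 < p) (f : ℝ → E) (a b : ℝ) :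
    pVar p f a b ^ p = pv p f a b := by
  have hppos : (0 : ℝ) < 1 / p := by positivity
  have key : ∀ x : ℝ≥0∞, (x ^ (1 / p)) ^ p = x := fun x => by
    rw [← ENNReal.rpow_mul, one_div_mul_cancel hp.ne', ENNReal.rpow_one]
  apply le_antisymm
  · -- pVar^p ≤ pv : enough pVar ≤ pv^(1/p)
    have h1 : pVar p f a b ≤ (pv p f a b) ^ (1 / p) := by
      refine iSup_le fun n => iSup_le fun t => iSup_le fun hmono => iSup_le fun h0 =>
        iSup_le fun hn => ?_
      refine ENNReal.rpow_le_rpow ?_ hppos.le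
      -- the Fin-sum equals a pvSum for the extended partition
      set t' : ℕ → ℝ := fun i => t ⟨min i n, by omega⟩ with ht'
      have hmono' : Monotone t' := fun i j hij => hmono (by simp [Fin.le_def]; omega)
      have h0' : t' 0 = a := by simpa [ht', Fin.ext_iff] using congrArg t (Fin.ext (by simp) : (⟨min 0 n, by omega⟩ : Fin (n+1)) = 0) |>.trans h0
      have hn' : t' n = b := by
        have : (⟨min n n, by omega⟩ : Fin (n+1)) = Fin.last n := Fin.ext (by simp)
        simpa [ht'] using congrArg t this |>.trans hn
      have hsum : (∑ i : Fin n, edist (f (t i.castSucc)) (f (t i.succ)) ^ p) = pvSum p f t' n := by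
        rw [pvSum, ← Fin.sum_univ_eq_sum_range]
        refine Finset.sum_congr rfl fun i _ => ?_
        have e1 : t' (i : ℕ) = t i.castSucc := congrArg t (Fin.ext (by
          simp [ht', Nat.min_eq_left (Nat.le_of_lt i.isLt)]))
        have e2 : t' ((i : ℕ) + 1) = t i.succ := congrArg t (Fin.ext (by
          simp [ht', Nat.min_eq_left i.isLt]))
        rw [e1, e2]
      rw [hsum]
      exact le_pv hmono' h0' hn'
    calc pVar p f a b ^ p ≤ ((pv p f a b) ^ (1/p)) ^ p :=
          ENNReal.rpow_le_rpow h1 hp.le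
      _ = pv p f a b := key _
  · refine pv_le fun n t hmono h0 hn => ?_
    set tf : Fin (n + 1) → ℝ := fun i => t i with htf
    have hmonof : Monotone tf := fun i j hij => hmono hij
    have h0f : tf 0 = a := h0
    have hnf : tf (Fin.last n) = b := hn
    have hsum : pvSum p f t n = ∑ i : Fin n, edist (f (tf i.castSucc)) (f (tf i.succ)) ^ p := by
      rw [pvSum, ← Fin.sum_univ_eq_sum_range]
      exact Finset.sum_congr rfl fun i _ => rfl
    have hle : (∑ i : Fin n, edist (f (tf i.castSucc)) (f (tf i.succ)) ^ p) ^ (1/p)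
        ≤ pVar p f a b := by
      rw [pVar]
      exact le_iSup_of_le n <| le_iSup_of_le tf <| le_iSup_of_le hmonof <|
        le_iSup_of_le h0f <| le_iSup_of_le hnf le_rfl
    calc pvSum p f t n
        = ((∑ i : Fin n, edist (f (tf i.castSucc)) (f (tf i.succ)) ^ p) ^ (1/p)) ^ p := by
          rw [key]; exact hsum
      _ ≤ pVar p f a b ^ p := ENNReal.rpow_le_rpow hle hp.le


-- stage 2
lemma pv_superadd {p : ℝ} (f : ℝ → E) {a b c : ℝ} (hab : a ≤ b) (hbc : b ≤ c) :
    pv p f a b + pv p f b c ≤ pv p f a c := by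
  haveI := part_nonempty hab
  haveI := part_nonempty hbc
  refine ENNReal.iSup_add_iSup_le fun D1 D2 => ?_
  obtain ⟨⟨n, t⟩, hmt, ht0, htn⟩ := D1
  obtain ⟨⟨m, s⟩, hms, hs0, hsm⟩ := D2
  dsimp only at hmt ht0 htn hms hs0 hsm
  set u : ℕ → ℝ := fun i => if i ≤ n then t i else s (i - n) with hu
  have humono : Monotone u := by
    intro i j hij
    simp only [hu]
    split_ifs with hi hj hj
    · exact hmt hij
    · calc t i ≤ t n := hmt hi
        _ = s 0 := htn.trans hs0.symm
        _ ≤ s (j - n) := hms (Nat.zero_le _)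
    · omega
    · exact hms (by omega)
  have hu0 : u 0 = a := by simp [hu, ht0]
  have hun : u (n + m) = c := by
    rcases Nat.eq_zero_or_pos m with hm | hm
    · subst hm
      have hbc' : b = c := hs0.symm.trans hsm
      simp only [hu, Nat.add_zero, if_pos le_rfl]
      rw [htn, hbc']
    · simp only [hu]
      rw [if_neg (by omega)]
      simpa using hsm
  have hsum : pvSum p f u (n + m) = pvSum p f t n + pvSum p f s m := by
    rw [pvSum, Finset.sum_range_add]
    congr 1
    · refine Finset.sum_congr rfl fun i hi => ?_
      simp only [Finset.mem_range] at hi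
      rw [hu]; simp only []
      rw [if_pos (by omega), if_pos (by omega)]
    · refine Finset.sum_congr rfl fun i hi => ?_
      simp only [Finset.mem_range] at hi
      rw [hu]; simp only []
      rcases Nat.eq_zero_or_pos i with hi0 | hi0
      · subst hi0
        rw [if_pos (by omega), if_neg (by omega)]
        have e0 : n + 0 = n := by omega
        have : n + 0 + 1 - n = 1 := by omega
        rw [this, e0, htn, hs0]
      · rw [if_neg (by omega), if_neg (by omega)]
        have e1 : n + i - n = i := by omega
        have e2 : n + i + 1 - n = i + 1 := by omega
        rw [e1, e2]
  rw [← hsum]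
  exact le_pv humono hu0 hun

lemma pv_mono_right {p : ℝ} (f : ℝ → E) {a b c : ℝ} (hab : a ≤ b) (hbc : b ≤ c) :
    pv p f a b ≤ pv p f a c :=
  le_trans (le_add_right le_rfl) (pv_superadd f hab hbc)

lemma pv_mono_left {p : ℝ} (f : ℝ → E) {a b c : ℝ} (hab : a ≤ b) (hbc : b ≤ c) :
    pv p f b c ≤ pv p f a c :=
  le_trans (le_add_left le_rfl) (pv_superadd f hab hbc)

lemma pv_self {p : ℝ} (hp : 0 < p) (f : ℝ → E) (a : ℝ) : pv p f a a = 0 := by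
  refine le_antisymm (pv_le fun n t hmono h0 hn => ?_) (zero_le)
  have hconst : ∀ i ≤ n, t i = a := fun i hi =>
    le_antisymm (hn ▸ hmono hi) (h0 ▸ hmono (Nat.zero_le i))
  rw [pvSum]
  refine le_of_eq (Finset.sum_eq_zero fun i hi => ?_)
  simp only [Finset.mem_range] at hi
  rw [hconst i (by omega), hconst (i+1) (by omega), edist_self,
    ENNReal.zero_rpow_of_pos hp]

lemma edist_le_pv {p : ℝ} (f : ℝ → E) {a b : ℝ} (hab : a ≤ b) :
    edist (f a) (f b) ^ p ≤ pv p f a b := by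
  have := le_pv (p := p) (f := f) (a := a) (b := b) (t := fun i => if i = 0 then a else b) (n := 1)
    (fun i j hij => by by_cases hi : i = 0 <;> by_cases hj : j = 0 <;>
      simp [hi, hj, hab, le_refl] <;> omega) (by simp) (by simp)
  simpa [pvSum] using this

lemma pv_eq_zero_apply {p : ℝ} (hp : 0 < p) (f : ℝ → E) {a b : ℝ}
    (h : pv p f a b = 0) {u v : ℝ} (hau : a ≤ u) (huv : u ≤ v) (hvb : v ≤ b) :
    edist (f u) (f v) = 0 := by
  have h1 : edist (f u) (f v) ^ p ≤ pv p f a b :=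
    le_trans (le_trans (edist_le_pv f huv) (pv_mono_right f huv hvb))
      (pv_mono_left f hau (huv.trans hvb))
  rw [h] at h1
  have h2 : edist (f u) (f v) ^ p = 0 := le_antisymm h1 (zero_le)
  rcases ENNReal.rpow_eq_zero_iff.1 h2 with ⟨h3, _⟩ | ⟨_, h4⟩
  · exact h3
  · linarith


lemma real_mod_mono {p b : ℝ} (hp : 1 ≤ p) (hb : 0 ≤ b) :
    MonotoneOn (fun x : ℝ => (x + b) ^ p - x ^ p) (Ici 0) := by
  have hcont : ContinuousOn (fun x : ℝ => (x + b) ^ p - x ^ p) (Ici 0) := by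
    have h1 : Continuous fun x : ℝ => x ^ p := Real.continuous_rpow_const (by linarith)
    exact ((h1.comp (continuous_add_right b)).sub h1).continuousOn
  have hderiv : ∀ x : ℝ, HasDerivAt (fun x : ℝ => (x + b) ^ p - x ^ p)
      (p * (x + b) ^ (p - 1) * 1 - p * x ^ (p - 1)) x := by
    intro x
    have h1 : HasDerivAt (fun x : ℝ => (x + b) ^ p) (p * (x + b) ^ (p - 1) * 1) x :=
      (Real.hasDerivAt_rpow_const (Or.inr hp)).comp x ((hasDerivAt_id x).add_const b)
    exact h1.sub (Real.hasDerivAt_rpow_const (Or.inr hp))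
  refine monotoneOn_of_deriv_nonneg (convex_Ici 0) hcont ?_ ?_
  · exact fun x _ => ((hderiv x).differentiableAt).differentiableWithinAt
  · intro x hx
    rw [interior_Ici] at hx
    rw [(hderiv x).deriv]
    have h2 : x ^ (p - 1) ≤ (x + b) ^ (p - 1) :=
      Real.rpow_le_rpow (le_of_lt hx) (by linarith) (by linarith)
    nlinarith [h2, (le_of_lt hx : (0:ℝ) ≤ x)]

lemma modulus {p : ℝ} (hp : 1 ≤ p) {M : ℝ≥0∞} (hM : M ≠ ⊤) {ε : ℝ≥0∞} (hε : 0 < ε) :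
    ∃ δ : ℝ≥0∞, 0 < δ ∧ δ ≠ ⊤ ∧
      ∀ x y : ℝ≥0∞, x ≤ M → y ≤ δ → (x + y) ^ p ≤ x ^ p + ε := by
  set ε' : ℝ≥0∞ := min ε 1 with hε'
  have hε'pos : 0 < ε' := lt_min hε zero_lt_one
  have hε'top : ε' ≠ ⊤ := ne_top_of_le_ne_top (by simp) (min_le_right _ _)
  have hε'le : ε' ≤ ε := min_le_left _ _
  set m : ℝ := M.toReal with hm
  have hmnn : 0 ≤ m := ENNReal.toReal_nonneg
  -- choose real δr with (m + δr)^p - m^p < ε'.toReal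
  have hcont : ContinuousAt (fun b : ℝ => (m + b) ^ p) 0 := by
    have h1 : Continuous fun x : ℝ => x ^ p := Real.continuous_rpow_const (by linarith)
    exact (h1.comp (continuous_add_left m)).continuousAt
  have htend : Tendsto (fun b : ℝ => (m + b) ^ p - m ^ p) (𝓝 0) (𝓝 0) := by
    have h1 : Tendsto (fun b : ℝ => (m + b) ^ p - m ^ p) (𝓝 0)
        (𝓝 ((m + 0) ^ p - m ^ p)) :=
      hcont.tendsto.sub (tendsto_const_nhds (x := m ^ p))
    simpa using h1
  have hε'r : 0 < ε'.toReal := ENNReal.toReal_pos hε'pos.ne' hε'top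
  obtain ⟨δr, hδr, hδrball⟩ := Metric.tendsto_nhds_nhds.1 htend ε'.toReal hε'r
  set δ2 : ℝ := δr / 2 with hδ2
  have hδ2pos : 0 < δ2 := by positivity
  have hbound : (m + δ2) ^ p - m ^ p < ε'.toReal := by
    have := hδrball (show dist δ2 0 < δr by
      rw [Real.dist_eq, sub_zero, abs_of_pos hδ2pos]; linarith)
    rw [Real.dist_eq, sub_zero] at this
    calc (m + δ2) ^ p - m ^ p ≤ |(m + δ2) ^ p - m ^ p| := le_abs_self _
      _ < ε'.toReal := this
  refine ⟨ENNReal.ofReal δ2, by simpa using hδ2pos, ENNReal.ofReal_ne_top, ?_⟩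
  intro x y hx hy
  have hxtop : x ≠ ⊤ := ne_top_of_le_ne_top hM hx
  have hytop : y ≠ ⊤ := ne_top_of_le_ne_top ENNReal.ofReal_ne_top hy
  set a : ℝ := x.toReal with ha
  set c : ℝ := y.toReal with hc
  have hann : 0 ≤ a := ENNReal.toReal_nonneg
  have hcnn : 0 ≤ c := ENNReal.toReal_nonneg
  have ham : a ≤ m := ENNReal.toReal_mono hM hx
  have hcδ : c ≤ δ2 := by
    have := ENNReal.toReal_mono ENNReal.ofReal_ne_top hy
    rwa [ENNReal.toReal_ofReal hδ2pos.le] at this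
  -- real inequality
  have hreal : (a + c) ^ p ≤ a ^ p + ε'.toReal := by
    have h1 : (a + c) ^ p - a ^ p ≤ (m + c) ^ p - m ^ p :=
      real_mod_mono hp hcnn hann (mem_Ici.2 hmnn) ham
    have h2 : (m + c) ^ p ≤ (m + δ2) ^ p :=
      Real.rpow_le_rpow (by linarith) (by linarith) (by linarith)
    have h3 : (m + δ2) ^ p - m ^ p ≤ ε'.toReal := hbound.le
    linarith
  -- lift to ℝ≥0∞
  have hxy : (x + y).toReal = a + c := ENNReal.toReal_add hxtop hytop
  have e1 : (x + y) ^ p = ENNReal.ofReal ((a + c) ^ p) := by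
    rw [← hxy, ENNReal.toReal_rpow, ENNReal.ofReal_toReal]
    exact ENNReal.rpow_ne_top_of_nonneg (by linarith) (ENNReal.add_ne_top.2 ⟨hxtop, hytop⟩)
  have e2 : ENNReal.ofReal (a ^ p) = x ^ p := by
    rw [ENNReal.toReal_rpow, ENNReal.ofReal_toReal]
    exact ENNReal.rpow_ne_top_of_nonneg (by linarith) hxtop
  calc (x + y) ^ p = ENNReal.ofReal ((a + c) ^ p) := e1
    _ ≤ ENNReal.ofReal (a ^ p + ε'.toReal) := ENNReal.ofReal_le_ofReal hreal
    _ = ENNReal.ofReal (a ^ p) + ENNReal.ofReal ε'.toReal := by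
        rw [ENNReal.ofReal_add (by positivity) hε'r.le]
    _ = x ^ p + ε' := by rw [e2, ENNReal.ofReal_toReal hε'top]
    _ ≤ x ^ p + ε := add_le_add le_rfl hε'le



section iter
variable {T p : ℝ} {X : ℝ → E}

lemma pv_right_small (hT : 0 < T) (hp : 1 ≤ p)
    (hcont : ContinuousOn X (Icc 0 T)) (hΩ : pv p X 0 T ≠ ⊤)
    {t : ℝ} (ht : t ∈ Ico 0 T) {ε : ℝ≥0∞} (hε : 0 < ε) :
    ∃ s ∈ Ioc t T, pv p X t s < ε := by
  have hp0 : (0 : ℝ) < p := lt_of_lt_of_le zero_lt_one hp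
  -- reduce to finite ε
  set ε₁ : ℝ≥0∞ := min ε 1 with hε₁
  have hε₁pos : 0 < ε₁ := lt_min hε zero_lt_one
  have hε₁top : ε₁ ≠ ⊤ := ne_top_of_le_ne_top (by simp) (min_le_right _ _)
  suffices h : ∃ s ∈ Ioc t T, pv p X t s < ε₁ by
    obtain ⟨s, hs, hlt⟩ := h
    exact ⟨s, hs, lt_of_lt_of_le hlt (min_le_left _ _)⟩
  by_contra hcon
  push_neg at hcon
  set e : ℝ≥0∞ := ε₁ / 4 with he
  have he0 : e ≠ 0 := by
    simp only [he, ne_eq, ENNReal.div_eq_zero_iff]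
    push_neg
    exact ⟨hε₁pos.ne', by norm_num⟩
  have heT : e ≠ ⊤ := by
    simp only [he]
    exact (ENNReal.div_lt_top hε₁top (by norm_num)).ne
  have h4e : 4 * e = ε₁ := ENNReal.mul_div_cancel' (by norm_num) (by norm_num)
  have claim : ∀ n : ℕ, ∀ s ∈ Ioc t T, (n : ℝ≥0∞) * (2 * e) ≤ pv p X t s := by
    intro n
    induction n with
    | zero => intro s _; simp
    | succ n IH =>
      intro s hs
      -- continuity of X at t within Icc 0 T
      have htIcc : t ∈ Icc 0 T := ⟨ht.1, ht.2.le⟩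
      have hXt : ContinuousWithinAt X (Icc 0 T) t := hcont t htIcc
      have hη : (0 : ℝ≥0∞) < e ^ (1 / p) :=
        ENNReal.rpow_pos (lt_of_le_of_ne (zero_le) (Ne.symm he0)) heT
      have hev : ∀ᶠ v in 𝓝[Icc 0 T] t, edist (X v) (X t) < e ^ (1 / p) :=
        (EMetric.tendsto_nhds.1 hXt) _ hη
      obtain ⟨δc, hδc, hball⟩ := Metric.mem_nhdsWithin_iff.1 hev
      set s1 : ℝ := min s (t + δc / 2) with hs1
      have hts1 : t < s1 := lt_min hs.1 (by linarith)
      have hs1T : s1 ≤ T := le_trans (min_le_left _ _) hs.2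
      have hs1s : s1 ≤ s := min_le_left _ _
      have hsmall : ∀ v ∈ Icc t s1, edist (X t) (X v) ^ p ≤ e := by
        intro v hv
        have hvIcc : v ∈ Icc 0 T := ⟨le_trans ht.1 hv.1, le_trans hv.2 hs1T⟩
        have hvball : v ∈ Metric.ball t δc := by
          rw [Metric.mem_ball, Real.dist_eq, abs_of_nonneg (by linarith [hv.1])]
          have : v ≤ t + δc / 2 := le_trans hv.2 (min_le_right _ _)
          linarith
        have hlt : edist (X v) (X t) < e ^ (1 / p) := hball ⟨hvball, hvIcc⟩
        have h1 : edist (X t) (X v) ^ p ≤ (e ^ (1 / p)) ^ p := by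
          rw [edist_comm]
          exact ENNReal.rpow_le_rpow hlt.le hp0.le
        rwa [← ENNReal.rpow_mul, one_div_mul_cancel hp0.ne', ENNReal.rpow_one] at h1
      -- pv on [t, s1] is at least ε₁ = 4e
      have hpv1 : ε₁ ≤ pv p X t s1 := hcon s1 ⟨hts1, hs1T⟩
      have h3e : 3 * e < pv p X t s1 := by
        refine lt_of_lt_of_le ?_ hpv1
        rw [← h4e]
        exact ENNReal.mul_lt_mul_left he0 heT (by norm_num)
      obtain ⟨n', u, humono, hu0, hun', hugt⟩ := lt_pv h3e
      -- k = last index with u k ≤ t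
      set k : ℕ := Nat.findGreatest (fun i => u i ≤ t) n' with hk
      have hk_le : k ≤ n' := Nat.findGreatest_le n'
      have hP : u k ≤ t := Nat.findGreatest_spec (P := fun i => u i ≤ t) (Nat.zero_le n') (le_of_eq hu0)
      have huk : u k = t := le_antisymm hP (hu0 ▸ humono (Nat.zero_le k))
      have hkn' : k < n' := by
        rcases lt_or_eq_of_le hk_le with h | h
        · exact h
        · exfalso; rw [h, hun'] at huk; exact absurd huk (by linarith)
      have hukk : t < u (k + 1) := by
        have h1 : ¬ (fun i => u i ≤ t) (k + 1) :=
          Nat.findGreatest_is_greatest (P := fun i => u i ≤ t)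
            (by rw [← hk]; exact lt_add_one k) (by omega : k + 1 ≤ n')
        exact not_le.1 h1
      have huconst : ∀ i ≤ k, u i = t := fun i hi =>
        le_antisymm (le_trans (humono hi) hP) (hu0 ▸ humono (Nat.zero_le i))
      -- split the sum
      have hsplit : pvSum p X u n' ≤ e + pvSum p X (fun i => u (k + 1 + i)) (n' - (k + 1)) := by
        rw [pvSum]
        conv_lhs => rw [show n' = (k + 1) + (n' - (k + 1)) from by omega]
        rw [Finset.sum_range_add]
        gcongr ?_ + ?_
        · -- first block ≤ e
          rw [Finset.sum_range_succ]
          have hz : ∀ i ∈ Finset.range k, edist (X (u i)) (X (u (i + 1))) ^ p = 0 := by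
            intro i hi
            simp only [Finset.mem_range] at hi
            rw [huconst i (by omega), huconst (i + 1) (by omega), edist_self,
              ENNReal.zero_rpow_of_pos hp0]
          rw [Finset.sum_eq_zero hz, zero_add, huk]
          refine hsmall (u (k + 1)) ⟨hukk.le, ?_⟩
          rw [← hun']
          exact humono (by omega)
        · exact le_of_eq (Finset.sum_congr rfl fun i _ => rfl)
      have htail : 2 * e ≤ pvSum p X (fun i => u (k + 1 + i)) (n' - (k + 1)) := by
        by_contra hlt2
        push_neg at hlt2
        have : e + pvSum p X (fun i => u (k + 1 + i)) (n' - (k + 1)) < e + 2 * e :=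
          ENNReal.add_lt_add_left heT hlt2
        have h3 : e + 2 * e = 3 * e := by ring
        rw [h3] at this
        exact absurd (lt_of_lt_of_le hugt hsplit) (not_lt.2 this.le)
      -- tail is a partition of [u (k+1), s1]
      have hwmono : Monotone fun i => u (k + 1 + i) := fun i j hij => humono (by omega)
      have hw0 : (fun i => u (k + 1 + i)) 0 = u (k + 1) := by simp
      have hwm : (fun i => u (k + 1 + i)) (n' - (k + 1)) = s1 := by
        simp only []
        rw [(by omega : k + 1 + (n' - (k + 1)) = n'), hun']
      have htail' : 2 * e ≤ pv p X (u (k + 1)) s1 :=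
        le_trans htail (le_pv hwmono hw0 hwm)
      -- induction hypothesis on [t, u (k+1)]
      have huk1T : u (k + 1) ∈ Ioc t T := by
        constructor
        · exact hukk
        · refine le_trans ?_ hs1T
          rw [← hun']; exact humono (by omega)
      have hIH := IH (u (k + 1)) huk1T
      -- combine
      have hcomb : (n : ℝ≥0∞) * (2 * e) + 2 * e ≤ pv p X t s := by
        calc (n : ℝ≥0∞) * (2 * e) + 2 * e
            ≤ pv p X t (u (k + 1)) + pv p X (u (k + 1)) s1 := add_le_add hIH htail'
          _ ≤ pv p X t s1 := pv_superadd X hukk.le (by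
              rw [← hun']; exact humono (by omega))
          _ ≤ pv p X t s := pv_mono_right X hts1.le hs1s
      calc ((n + 1 : ℕ) : ℝ≥0∞) * (2 * e) = (n : ℝ≥0∞) * (2 * e) + 2 * e := by
            push_cast; ring
        _ ≤ pv p X t s := hcomb
  -- contradiction with finiteness
  have hfin : pv p X t T ≠ ⊤ := ne_top_of_le_ne_top hΩ (pv_mono_left X ht.1 ht.2.le)
  have hdivfin : pv p X t T / (2 * e) ≠ ⊤ := by
    refine (ENNReal.div_lt_top hfin ?_).ne
    simp [he0]
  obtain ⟨n, hn⟩ := ENNReal.exists_nat_gt hdivfin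
  have h2e0 : (2 : ℝ≥0∞) * e ≠ 0 := by simp [he0]
  have h2eT : (2 : ℝ≥0∞) * e ≠ ⊤ := ENNReal.mul_ne_top (by norm_num) heT
  have hgt : pv p X t T < (n : ℝ≥0∞) * (2 * e) := by
    have h1 : 2 * e * (pv p X t T / (2 * e)) < 2 * e * (n : ℝ≥0∞) :=
      ENNReal.mul_lt_mul_right h2e0 h2eT hn
    rw [ENNReal.mul_div_cancel h2e0 h2eT] at h1
    exact h1.trans_eq (mul_comm _ _)
  exact absurd (claim n T ⟨ht.2, le_refl T⟩) (not_le.2 hgt)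

end iter


section cont
variable {T p : ℝ} {X : ℝ → E}

/-- Core estimate: almost-subadditivity near `t`. -/
lemma pv_almost_subadd (hT : 0 < T) (hp : 1 ≤ p)
    (hΩ : pv p X 0 T ≠ ⊤) {t s : ℝ} (ht : 0 ≤ t) (hts : t < s) (hsT : s ≤ T)
    {δ ε : ℝ≥0∞}
    (hmod : ∀ x y : ℝ≥0∞, x ≤ (pv p X 0 T) ^ (1/p) → y ≤ δ → (x + y) ^ p ≤ x ^ p + ε)
    (hnear : ∀ v ∈ Ioc t s, edist (X t) (X v) ≤ δ) :
    pv p X 0 s ≤ pv p X 0 t + ε + pv p X t s := by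
  have hp0 : (0 : ℝ) < p := lt_of_lt_of_le zero_lt_one hp
  refine pv_le fun n u humono hu0 hun => ?_
  have hu_nonneg : ∀ i, 0 ≤ u i := fun i => hu0 ▸ humono (Nat.zero_le i)
  set k : ℕ := Nat.findGreatest (fun i => u i ≤ t) n with hk
  have hk_le : k ≤ n := Nat.findGreatest_le n
  have hP : u k ≤ t := Nat.findGreatest_spec (P := fun i => u i ≤ t) (Nat.zero_le n)
    (le_of_eq_of_le hu0 ht)
  have hkn : k < n := by
    rcases lt_or_eq_of_le hk_le with h | h
    · exact h
    · exfalso; rw [h] at hP; rw [hun] at hP; linarith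
  have hukk : t < u (k + 1) := by
    have h1 : ¬ (fun i => u i ≤ t) (k + 1) :=
      Nat.findGreatest_is_greatest (P := fun i => u i ≤ t)
        (by rw [← hk]; exact lt_add_one k) (by omega : k + 1 ≤ n)
    exact not_le.1 h1
  have huk1s : u (k + 1) ≤ s := hun ▸ humono (by omega : k + 1 ≤ n)
  -- the single straddling increment
  set x : ℝ≥0∞ := edist (X (u k)) (X t) with hx
  have hxM : x ≤ (pv p X 0 T) ^ (1/p) := by
    have h1 : x ^ p ≤ pv p X (u k) t := edist_le_pv X hP
    have h2 : pv p X (u k) t ≤ pv p X 0 T :=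
      le_trans (pv_mono_left X (hu_nonneg k) hP)
        (pv_mono_right X ht (hts.le.trans hsT))
    have h3 : (x ^ p) ^ (1/p) ≤ (pv p X 0 T) ^ (1/p) :=
      ENNReal.rpow_le_rpow (h1.trans h2) (by positivity)
    rwa [← ENNReal.rpow_mul, mul_one_div_cancel hp0.ne', ENNReal.rpow_one] at h3
  have hterm : edist (X (u k)) (X (u (k + 1))) ^ p ≤ x ^ p + ε := by
    have htri : edist (X (u k)) (X (u (k + 1))) ≤ x + edist (X t) (X (u (k + 1))) :=
      edist_triangle _ _ _
    have hy : edist (X t) (X (u (k + 1))) ≤ δ := hnear _ ⟨hukk, huk1s⟩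
    calc edist (X (u k)) (X (u (k + 1))) ^ p
        ≤ (x + edist (X t) (X (u (k + 1)))) ^ p := ENNReal.rpow_le_rpow htri hp0.le
      _ ≤ x ^ p + ε := hmod _ _ hxM hy
  -- prefix: partition of [0, t]
  have hprefix : (∑ i ∈ Finset.range k, edist (X (u i)) (X (u (i + 1))) ^ p) + x ^ p
      ≤ pv p X 0 t := by
    set w : ℕ → ℝ := fun i => if i ≤ k then u i else t with hw
    have hwmono : Monotone w := by
      intro i j hij
      simp only [hw]
      split_ifs with hi hj hj
      · exact humono hij
      · exact le_trans (humono hi) hP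
      · omega
      · exact le_rfl
    have hw0 : w 0 = 0 := by simp [hw, hu0]
    have hwk : w (k + 1) = t := by simp [hw]
    have : pvSum p X w (k + 1)
        = (∑ i ∈ Finset.range k, edist (X (u i)) (X (u (i + 1))) ^ p) + x ^ p := by
      rw [pvSum, Finset.sum_range_succ]
      congr 1
      · refine Finset.sum_congr rfl fun i hi => ?_
        simp only [Finset.mem_range] at hi
        rw [hw]; simp only []
        rw [if_pos (by omega), if_pos (by omega)]
      · rw [hw]; simp only []
        rw [if_pos le_rfl, if_neg (by omega)]
    rw [← this]
    exact le_pv hwmono hw0 hwk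
  -- tail: partition of [u (k+1), s]
  have htail : (∑ i ∈ Finset.range (n - (k + 1)),
      edist (X (u (k + 1 + i))) (X (u (k + 1 + i + 1))) ^ p) ≤ pv p X t s := by
    have hwmono : Monotone fun i => u (k + 1 + i) := fun i j hij => humono (by omega)
    have hw0 : (fun i => u (k + 1 + i)) 0 = u (k + 1) := by simp
    have hwm : (fun i => u (k + 1 + i)) (n - (k + 1)) = s := by
      simp only []
      rw [(by omega : k + 1 + (n - (k + 1)) = n), hun]
    refine le_trans (le_pv (p := p) (f := X) hwmono hw0 hwm) ?_
    exact pv_mono_left X hukk.le (huk1s.trans_eq' rfl)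
  -- assemble
  have hsplit : pvSum p X u n
      ≤ ((∑ i ∈ Finset.range k, edist (X (u i)) (X (u (i + 1))) ^ p) + (x ^ p + ε))
        + (∑ i ∈ Finset.range (n - (k + 1)),
            edist (X (u (k + 1 + i))) (X (u (k + 1 + i + 1))) ^ p) := by
    rw [pvSum]
    conv_lhs => rw [show n = (k + 1) + (n - (k + 1)) from by omega]
    rw [Finset.sum_range_add]
    gcongr ?_ + ?_
    · rw [Finset.sum_range_succ]
      exact add_le_add le_rfl hterm
    · exact le_of_eq (Finset.sum_congr rfl fun i _ => rfl)
  calc pvSum p X u n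
      ≤ ((∑ i ∈ Finset.range k, edist (X (u i)) (X (u (i + 1))) ^ p) + (x ^ p + ε))
        + (∑ i ∈ Finset.range (n - (k + 1)),
            edist (X (u (k + 1 + i))) (X (u (k + 1 + i + 1))) ^ p) := hsplit
    _ ≤ (pv p X 0 t + ε) + pv p X t s := by
        refine add_le_add ?_ htail
        calc (∑ i ∈ Finset.range k, edist (X (u i)) (X (u (i + 1))) ^ p) + (x ^ p + ε)
            = ((∑ i ∈ Finset.range k, edist (X (u i)) (X (u (i + 1))) ^ p) + x ^ p) + ε := by
              ring
          _ ≤ pv p X 0 t + ε := add_le_add hprefix le_rfl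
    _ = pv p X 0 t + ε + pv p X t s := rfl

lemma pv_continuousOn (hT : 0 < T) (hp : 1 ≤ p)
    (hcont : ContinuousOn X (Icc 0 T)) (hΩ : pv p X 0 T ≠ ⊤) :
    ContinuousOn (fun t => pv p X 0 t) (Icc 0 T) := by
  have hp0 : (0 : ℝ) < p := lt_of_lt_of_le zero_lt_one hp
  intro t htIcc
  rw [ContinuousWithinAt]
  refine tendsto_order.2 ⟨?_, ?_⟩
  · -- lower bound
    intro c hc
    obtain ⟨n, u, humono, hu0, hun, hugt⟩ := lt_pv hc
    have hu_nonneg : ∀ i, 0 ≤ u i := fun i => hu0 ▸ humono (Nat.zero_le i)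
    have hu_le_t : ∀ i ≤ n, u i ≤ t := fun i hi => hun ▸ humono hi
    set F : ℝ → ℝ≥0∞ := fun s => pvSum p X (fun i => min (u i) s) n with hF
    have hF_le : ∀ s ∈ Icc 0 t, F s ≤ pv p X 0 s := by
      intro s hs
      refine le_pv (fun i j hij =>
        le_min (le_trans (min_le_left _ _) (humono hij)) (min_le_right _ _)) ?_ ?_
      · show min (u 0) s = 0
        rw [hu0]; exact min_eq_left hs.1
      · show min (u n) s = s
        rw [hun]; exact min_eq_right hs.2
    have hFt : F t = pvSum p X u n := by
      refine Finset.sum_congr rfl fun i hi => ?_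
      simp only [Finset.mem_range] at hi
      simp only [min_eq_left (hu_le_t i (by omega)), min_eq_left (hu_le_t (i+1) (by omega))]
    have hg : ∀ j, j ≤ n → Tendsto (fun s => X (min (u j) s)) (𝓝[Icc 0 T] t)
        (𝓝 (X (u j))) := by
      intro j hj
      have hujIcc : u j ∈ Icc 0 T := ⟨hu_nonneg j, le_trans (hu_le_t j hj) htIcc.2⟩
      have hmin : ContinuousWithinAt (fun s => min (u j) s) (Icc 0 T) t :=
        (continuous_const.min continuous_id).continuousWithinAt
      have hmaps : MapsTo (fun s => min (u j) s) (Icc 0 T) (Icc 0 T) := fun s hs =>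
        ⟨le_min (hu_nonneg j) hs.1, le_trans (min_le_right _ _) hs.2⟩
      have hXuj : ContinuousWithinAt X (Icc 0 T) (min (u j) t) := by
        rw [min_eq_left (hu_le_t j hj)]; exact hcont (u j) hujIcc
      have hcomp := ContinuousWithinAt.comp (x := t) hXuj hmin hmaps
      rw [ContinuousWithinAt] at hcomp
      simpa [Function.comp_def, min_eq_left (hu_le_t j hj)] using hcomp
    have hFtend : Tendsto F (𝓝[Icc 0 T] t) (𝓝 (F t)) := by
      rw [hFt]
      have : Tendsto (fun s => pvSum p X (fun i => min (u i) s) n) (𝓝[Icc 0 T] t)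
          (𝓝 (pvSum p X u n)) := by
        simp only [pvSum]
        refine tendsto_finset_sum _ fun i hi => ?_
        simp only [Finset.mem_range] at hi
        exact (ENNReal.continuous_rpow_const.tendsto _).comp
          ((hg i (by omega)).edist (hg (i + 1) (by omega)))
      exact this
    have hev1 : ∀ᶠ s in 𝓝[Icc 0 T] t, c < F s :=
      hFtend.eventually (lt_mem_nhds (hFt ▸ hugt))
    filter_upwards [hev1, self_mem_nhdsWithin] with s hs1 hs2
    rcases le_or_gt s t with hst | hts
    · exact lt_of_lt_of_le hs1 (hF_le s ⟨hs2.1, hst⟩)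
    · exact lt_of_lt_of_le hugt
        (le_trans (le_pv humono hu0 hun) (pv_mono_right X htIcc.1 hts.le))
  · -- upper bound
    intro c hc
    rcases lt_or_ge (pv p X 0 T) c with hΩc | hcΩ
    · filter_upwards [self_mem_nhdsWithin] with s hs
      exact lt_of_le_of_lt (pv_mono_right X hs.1 hs.2) hΩc
    · have hcT : c ≠ ⊤ := ne_top_of_le_ne_top hΩ hcΩ
      have hptT : pv p X 0 t ≠ ⊤ := ne_top_of_lt hc
      set ε : ℝ≥0∞ := (c - pv p X 0 t) / 4 with hε
      have hsub0 : c - pv p X 0 t ≠ 0 := by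
        simp only [ne_eq, tsub_eq_zero_iff_le, not_le]
        exact hc
      have hε0 : ε ≠ 0 := by
        simp only [hε, ne_eq, ENNReal.div_eq_zero_iff]
        push_neg
        exact ⟨hsub0, by norm_num⟩
      have hεT : ε ≠ ⊤ := by
        simp only [hε]
        exact (ENNReal.div_lt_top (by simp [hcT]) (by norm_num)).ne
      have h4ε : 4 * ε = c - pv p X 0 t :=
        ENNReal.mul_div_cancel' (by norm_num) (by norm_num)
      have hkey : pv p X 0 t + 3 * ε < c := by
        have h1 : pv p X 0 t + 4 * ε = c := by
          rw [h4ε, add_tsub_cancel_of_le hc.le]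
        have h2 : (3 : ℝ≥0∞) * ε < 4 * ε :=
          ENNReal.mul_lt_mul_left hε0 hεT (by norm_num)
        calc pv p X 0 t + 3 * ε < pv p X 0 t + 4 * ε :=
              ENNReal.add_lt_add_left hptT h2
          _ = c := h1
      rcases eq_or_lt_of_le htIcc.2 with htT | htT
      · -- t = T : only left approach matters
        filter_upwards [self_mem_nhdsWithin] with s hs
        have : pv p X 0 s ≤ pv p X 0 t := pv_mono_right X hs.1 (htT ▸ hs.2)
        exact lt_of_le_of_lt this hc
      · -- t < T
        obtain ⟨δ, hδ0, hδT, hmod⟩ := modulus (M := (pv p X 0 T) ^ (1/p)) hp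
          (ENNReal.rpow_ne_top_of_nonneg (by positivity) hΩ)
          (lt_of_le_of_ne (zero_le) (Ne.symm hε0) : (0:ℝ≥0∞) < ε)
        -- continuity at t : edist small
        have hXt : ContinuousWithinAt X (Icc 0 T) t := hcont t htIcc
        have hev : ∀ᶠ v in 𝓝[Icc 0 T] t, edist (X v) (X t) < δ :=
          (EMetric.tendsto_nhds.1 hXt) _ (lt_of_le_of_ne (zero_le) (Ne.symm hδ0.ne'))
        obtain ⟨δc, hδc, hball⟩ := Metric.mem_nhdsWithin_iff.1 hev
        obtain ⟨s₂, hs₂, hpvs₂⟩ := pv_right_small hT hp hcont hΩ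
          (⟨htIcc.1, htT⟩ : t ∈ Ico 0 T)
          (lt_of_le_of_ne (zero_le) (Ne.symm hε0) : (0:ℝ≥0∞) < ε)
        set s₀ : ℝ := min s₂ (t + δc / 2) with hs₀
        have hts₀ : t < s₀ := lt_min hs₂.1 (by linarith)
        have hs₀T : s₀ ≤ T := le_trans (min_le_left _ _) hs₂.2
        have hclaim : ∀ s ∈ Ioc t s₀, pv p X 0 s ≤ pv p X 0 t + ε + pv p X t s := by
          intro s hs
          refine pv_almost_subadd hT hp hΩ htIcc.1 hs.1 (hs.2.trans hs₀T) hmod ?_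
          intro v hv
          have hvIcc : v ∈ Icc 0 T :=
            ⟨le_trans htIcc.1 hv.1.le, le_trans hv.2 ((hs.2.trans hs₀T))⟩
          have hvball : v ∈ Metric.ball t δc := by
            rw [Metric.mem_ball, Real.dist_eq, abs_of_pos (by linarith [hv.1])]
            have h1 : v ≤ s₀ := le_trans hv.2 hs.2
            have h2 : s₀ ≤ t + δc / 2 := min_le_right _ _
            linarith
          have := hball ⟨hvball, hvIcc⟩
          rw [edist_comm]
          exact le_of_lt this
        have hevlt : ∀ᶠ s in 𝓝[Icc 0 T] t, |s - t| < s₀ - t := by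
          have : Metric.ball t (s₀ - t) ∈ 𝓝[Icc 0 T] t :=
            nhdsWithin_le_nhds (Metric.ball_mem_nhds t (by linarith))
          filter_upwards [this] with s hs
          rwa [Metric.mem_ball, Real.dist_eq] at hs
        filter_upwards [hevlt, self_mem_nhdsWithin] with s hs1 hs2
        rcases le_or_gt s t with hst | hts
        · exact lt_of_le_of_lt (pv_mono_right X hs2.1 hst)
            (lt_of_le_of_lt (le_add_right le_rfl) hkey)
        · have hss₀ : s ≤ s₀ := by
            have := abs_lt.1 hs1
            linarith [this.2]
          have h1 : pv p X 0 s ≤ pv p X 0 t + ε + pv p X t s :=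
            hclaim s ⟨hts, hss₀⟩
          have h2 : pv p X t s ≤ ε :=
            le_trans (pv_mono_right X hts.le (le_trans hss₀ (min_le_left _ _))) hpvs₂.le
          have h3 : pv p X 0 t + ε + pv p X t s ≤ pv p X 0 t + 3 * ε := by
            calc pv p X 0 t + ε + pv p X t s ≤ pv p X 0 t + ε + ε :=
                  add_le_add le_rfl h2
              _ ≤ pv p X 0 t + 3 * ε := by
                  rw [add_assoc]
                  refine add_le_add le_rfl ?_
                  calc ε + ε = 2 * ε := by ring
                    _ ≤ 3 * ε := by gcongr <;> norm_num
          exact lt_of_le_of_lt (h1.trans h3) hkey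

end cont


lemma pv_const {p : ℝ} (hp : 0 < p) (c : E) (a b : ℝ) :
    pv p (fun _ => c) a b = 0 := by
  refine le_antisymm (pv_le fun n t _ _ _ => ?_) (zero_le)
  rw [pvSum]
  exact le_of_eq (Finset.sum_eq_zero fun i _ => by
    rw [edist_self, ENNReal.zero_rpow_of_pos hp])

end HCR

/-- every continuous path of finite `p`-variation admits a Hölder-control
reparameterisation: `X = X̃ ∘ φ` with `φ : [0,T] → [0,T]` a continuous nondecreasing
surjection and `‖X̃‖_{p-var;[0,t]}^p = (t/T)·‖X‖_{p-var;[0,T]}^p` for all `t ∈ [0,T]`. -/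
theorem exists_holder_control_reparam {E : Type*} [MetricSpace E]
    (T : ℝ) (hT : 0 < T) (p : ℝ) (hp : 1 ≤ p)
    (X : ℝ → E) (hcont : ContinuousOn X (Icc 0 T)) (hfin : pVar p X 0 T ≠ ⊤) :
    ∃ (φ : ℝ → ℝ) (Xt : ℝ → E),
      ContinuousOn φ (Icc 0 T) ∧ MonotoneOn φ (Icc 0 T) ∧ φ '' Icc 0 T = Icc 0 T ∧
      ContinuousOn Xt (Icc 0 T) ∧
      (∀ t ∈ Icc (0 : ℝ) T, X t = Xt (φ t)) ∧
      (∀ t ∈ Icc (0 : ℝ) T,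
        pVar p Xt 0 t ^ p = ENNReal.ofReal (t / T) * pVar p X 0 T ^ p) := by
  classical
  have hp0 : (0 : ℝ) < p := lt_of_lt_of_le zero_lt_one hp
  have hpVar_pv : ∀ (Y : ℝ → E) (a b : ℝ), pVar p Y a b ^ p = HCR.pv p Y a b :=
    fun Y a b => HCR.pVar_rpow_eq hp0 Y a b
  set Ω : ℝ≥0∞ := HCR.pv p X 0 T with hΩdef
  have hΩ : Ω ≠ ⊤ := by
    rw [hΩdef, ← hpVar_pv]
    exact ENNReal.rpow_ne_top_of_nonneg hp0.le hfin
  by_cases hΩ0 : Ω = 0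
  · -- X is constant on [0,T]
    refine ⟨id, fun _ => X 0, continuousOn_id, fun a _ b _ h => h, image_id _,
      continuousOn_const, ?_, ?_⟩
    · intro t ht
      have := HCR.pv_eq_zero_apply hp0 X hΩ0 (le_refl (0:ℝ)) ht.1 ht.2
      exact (edist_eq_zero.1 this).symm
    · intro t ht
      rw [hpVar_pv, hpVar_pv, HCR.pv_const hp0, ← hΩdef, hΩ0, mul_zero]
  · -- main case
    have hΩtR : 0 < Ω.toReal := ENNReal.toReal_pos hΩ0 hΩ
    set ω : ℝ → ℝ≥0∞ := fun t => HCR.pv p X 0 t with hωdef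
    have hωfin : ∀ t ∈ Icc (0:ℝ) T, ω t ≠ ⊤ := fun t ht =>
      ne_top_of_le_ne_top hΩ (HCR.pv_mono_right X ht.1 ht.2)
    have hωmono : ∀ s t : ℝ, 0 ≤ s → s ≤ t → ω s ≤ ω t := fun s t hs hst =>
      HCR.pv_mono_right X hs hst
    have hω0 : ω 0 = 0 := HCR.pv_self hp0 X 0
    set φ : ℝ → ℝ := fun t => T * (ω t).toReal / Ω.toReal with hφdef
    have hφ0 : φ 0 = 0 := by simp [hφdef, hω0]
    have hφT : φ T = T := by
      simp only [hφdef, hωdef, ← hΩdef]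
      rw [mul_div_assoc, div_self hΩtR.ne', mul_one]
    have hφmono : MonotoneOn φ (Icc 0 T) := by
      intro s hs t ht hst
      have h1 : (ω s).toReal ≤ (ω t).toReal :=
        ENNReal.toReal_mono (hωfin t ht) (hωmono s t hs.1 hst)
      simp only [hφdef]
      have hTpos := hT.le
      gcongr
    have hφcont : ContinuousOn φ (Icc 0 T) := by
      intro t ht
      have hωc := HCR.pv_continuousOn hT hp hcont hΩ t ht
      have h1 : ContinuousWithinAt (fun s => (ω s).toReal) (Icc 0 T) t :=
        (ENNReal.tendsto_toReal (hωfin t ht)).comp hωc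
      exact (continuousWithinAt_const.mul h1).div_const Ω.toReal
    have hφ_mem : ∀ t ∈ Icc (0:ℝ) T, φ t ∈ Icc (0:ℝ) T := by
      intro t ht
      constructor
      · rw [← hφ0]
        exact hφmono ⟨le_refl 0, hT.le⟩ ht ht.1
      · rw [← hφT]
        exact hφmono ht ⟨hT.le, le_refl T⟩ ht.2
    have himage : φ '' Icc 0 T = Icc 0 T := by
      apply Subset.antisymm
      · rintro _ ⟨t, ht, rfl⟩
        exact hφ_mem t ht
      · have h1 := intermediate_value_Icc hT.le hφcont
        rwa [hφ0, hφT] at h1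
    -- the fibers and the section g
    have hfiber_closed : ∀ u : ℝ, IsClosed {t' | t' ∈ Icc (0:ℝ) T ∧ φ t' = u} := by
      intro u
      have h1 : {t' | t' ∈ Icc (0:ℝ) T ∧ φ t' = u} = Icc 0 T ∩ φ ⁻¹' {u} := by
        ext t'; simp [mem_preimage]
      rw [h1]
      exact hφcont.preimage_isClosed_of_isClosed isClosed_Icc isClosed_singleton
    have hfiber_bdd : ∀ u : ℝ, BddBelow {t' | t' ∈ Icc (0:ℝ) T ∧ φ t' = u} :=
      fun u => ⟨0, fun t' ht' => ht'.1.1⟩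
    have hfiber_ne : ∀ u ∈ Icc (0:ℝ) T, {t' | t' ∈ Icc (0:ℝ) T ∧ φ t' = u}.Nonempty := by
      intro u hu
      rw [← himage] at hu
      obtain ⟨t', ht', hφt'⟩ := hu
      exact ⟨t', ht', hφt'⟩
    set g : ℝ → ℝ := fun u => sInf {t' | t' ∈ Icc (0:ℝ) T ∧ φ t' = u} with hgdef
    have hg_mem : ∀ u ∈ Icc (0:ℝ) T, g u ∈ Icc (0:ℝ) T ∧ φ (g u) = u := fun u hu =>
      (hfiber_closed u).csInf_mem (hfiber_ne u hu) (hfiber_bdd u)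
    have hg_le : ∀ u : ℝ, ∀ t' ∈ Icc (0:ℝ) T, φ t' = u → g u ≤ t' := fun u t' ht' hφt' =>
      csInf_le (hfiber_bdd u) ⟨ht', hφt'⟩
    have hg0 : g 0 = 0 :=
      le_antisymm (hg_le 0 0 ⟨le_refl 0, hT.le⟩ hφ0) (hg_mem 0 ⟨le_refl 0, hT.le⟩).1.1
    have hgmono : ∀ u ∈ Icc (0:ℝ) T, ∀ v ∈ Icc (0:ℝ) T, u ≤ v → g u ≤ g v := by
      intro u hu v hv huv
      obtain ⟨hgvIcc, hφgv⟩ := hg_mem v hv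
      have h1 : Icc (φ 0) (φ (g v)) ⊆ φ '' Icc 0 (g v) :=
        intermediate_value_Icc hgvIcc.1 (hφcont.mono (Icc_subset_Icc le_rfl hgvIcc.2))
      have h2 : u ∈ Icc (φ 0) (φ (g v)) := by
        rw [hφ0, hφgv]; exact ⟨hu.1, huv⟩
      obtain ⟨w, hw, hφw⟩ := h1 h2
      exact le_trans (hg_le u w ⟨hw.1, hw.2.trans hgvIcc.2⟩ hφw) hw.2
    -- φ identifies points with equal ω, on which X is constant
    have hωeq_of_φeq : ∀ s t : ℝ, s ∈ Icc (0:ℝ) T → t ∈ Icc (0:ℝ) T → φ s = φ t →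
        ω s = ω t := by
      intro s t hs ht hφst
      simp only [hφdef] at hφst
      have h1 : (ω s).toReal = (ω t).toReal := by
        have h2 := congrArg (fun z : ℝ => z * Ω.toReal / T) hφst
        rw [div_mul_cancel₀ _ hΩtR.ne', div_mul_cancel₀ _ hΩtR.ne',
          mul_div_cancel_left₀ _ hT.ne', mul_div_cancel_left₀ _ hT.ne'] at h2
        exact h2
      exact (ENNReal.toReal_eq_toReal_iff' (hωfin s hs) (hωfin t ht)).1 h1
    have hXconst : ∀ s t : ℝ, s ∈ Icc (0:ℝ) T → t ∈ Icc (0:ℝ) T → s ≤ t → φ s = φ t →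
        X s = X t := by
      intro s t hs ht hst hφst
      have hωst : ω s = ω t := hωeq_of_φeq s t hs ht hφst
      have hpv0 : HCR.pv p X s t = 0 := by
        by_contra hne
        have h1 : ω s < ω s + HCR.pv p X s t :=
          ENNReal.lt_add_right (hωfin s hs) hne
        have h2 : ω s + HCR.pv p X s t ≤ ω t := HCR.pv_superadd X hs.1 hst
        rw [← hωst] at h2
        exact absurd h2 (not_le.2 h1)
      exact edist_eq_zero.1 (HCR.pv_eq_zero_apply hp0 X hpv0 le_rfl hst le_rfl)
    set Xt : ℝ → E := fun u => X (g u) with hXtdef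
    have hcompat : ∀ t ∈ Icc (0:ℝ) T, X t = Xt (φ t) := by
      intro t ht
      obtain ⟨hgIcc, hφg⟩ := hg_mem (φ t) (hφ_mem t ht)
      exact (hXconst (g (φ t)) t hgIcc ht (hg_le (φ t) t ht rfl) hφg).symm
    -- continuity of Xt via the quotient map
    have hXtcont : ContinuousOn Xt (Icc 0 T) := by
      haveI : CompactSpace (Icc (0:ℝ) T) := isCompact_iff_compactSpace.1 isCompact_Icc
      set φ' : Icc (0:ℝ) T → Icc (0:ℝ) T := fun x => ⟨φ x, hφ_mem x x.2⟩ with hφ'def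
      have hφ'cont : Continuous φ' :=
        Continuous.subtype_mk (continuousOn_iff_continuous_restrict.1 hφcont) _
      have hφ'surj : Function.Surjective φ' := by
        intro y
        have : (y : ℝ) ∈ φ '' Icc 0 T := by rw [himage]; exact y.2
        obtain ⟨t, ht, hφt⟩ := this
        exact ⟨⟨t, ht⟩, Subtype.ext hφt⟩
      have hq : Topology.IsQuotientMap φ' :=
        Topology.IsQuotientMap.of_surjective_continuous hφ'surj hφ'cont
      rw [continuousOn_iff_continuous_restrict]
      rw [hq.continuous_iff]
      have heq : (Icc (0:ℝ) T).restrict Xt ∘ φ' = (Icc (0:ℝ) T).restrict X := by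
        funext x
        exact (hcompat x x.2).symm
      rw [show (Icc (0:ℝ) T).domRestrict Xt ∘ φ' = (Icc (0:ℝ) T).restrict X from heq]
      exact continuousOn_iff_continuous_restrict.1 hcont
    refine ⟨φ, Xt, hφcont, hφmono, himage, hXtcont, hcompat, ?_⟩
    -- the variation identity
    intro t ht
    rw [hpVar_pv, hpVar_pv, ← hΩdef]
    obtain ⟨hsIcc, hφs⟩ := hg_mem t ht
    set s : ℝ := g t with hsdef
    -- Step 1 : pv p Xt 0 t = ω s
    have hstep1 : HCR.pv p Xt 0 t = ω s := by
      apply le_antisymm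
      · refine HCR.pv_le fun m v hvmono hv0 hvm => ?_
        have hv_mem : ∀ i, v (min i m) ∈ Icc (0:ℝ) T := by
          intro i
          constructor
          · rw [← hv0]; exact hvmono (Nat.zero_le _)
          · exact le_trans (hvm ▸ hvmono (min_le_right i m)) ht.2
        set v' : ℕ → ℝ := fun i => g (v (min i m)) with hv'def
        have hv'mono : Monotone v' := fun i j hij =>
          hgmono _ (hv_mem i) _ (hv_mem j) (hvmono (by omega))
        have hv'0 : v' 0 = 0 := by
          simp only [hv'def, Nat.min_eq_left (Nat.zero_le m), hv0, hg0]
        have hv'm : v' m = s := by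
          simp only [hv'def, min_self, hvm, hsdef]
        have hsum : HCR.pvSum p Xt v m = HCR.pvSum p X v' m := by
          refine Finset.sum_congr rfl fun i hi => ?_
          simp only [Finset.mem_range] at hi
          simp only [hv'def, Nat.min_eq_left (by omega : i ≤ m),
            Nat.min_eq_left (by omega : i + 1 ≤ m), hXtdef]
        rw [hsum]
        exact HCR.le_pv hv'mono hv'0 hv'm
      · refine HCR.pv_le fun m w hwmono hw0 hwm => ?_
        have hw_mem : ∀ i, w (min i m) ∈ Icc (0:ℝ) T := by
          intro i
          constructor
          · rw [← hw0]; exact hwmono (Nat.zero_le _)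
          · exact le_trans (hwm ▸ hwmono (min_le_right i m)) hsIcc.2
        have hw_mem' : ∀ i ≤ m, w i ∈ Icc (0:ℝ) T := by
          intro i hi
          have := hw_mem i
          rwa [Nat.min_eq_left hi] at this
        set v' : ℕ → ℝ := fun i => φ (w (min i m)) with hv'def
        have hv'mono : Monotone v' := fun i j hij =>
          hφmono (hw_mem i) (hw_mem j) (hwmono (by omega))
        have hv'0 : v' 0 = 0 := by
          simp only [hv'def, Nat.min_eq_left (Nat.zero_le m), hw0, hφ0]
        have hv'm : v' m = t := by
          simp only [hv'def, min_self, hwm, hφs]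
        have hsum : HCR.pvSum p X w m = HCR.pvSum p Xt v' m := by
          refine Finset.sum_congr rfl fun i hi => ?_
          simp only [Finset.mem_range] at hi
          simp only [hv'def, Nat.min_eq_left (by omega : i ≤ m),
            Nat.min_eq_left (by omega : i + 1 ≤ m)]
          rw [← hcompat (w i) (hw_mem' i (by omega)), ← hcompat (w (i+1)) (hw_mem' (i+1) (by omega))]
        rw [hsum]
        exact HCR.le_pv hv'mono hv'0 hv'm
    -- Step 2 : ofReal (t / T) * Ω = ω s
    have htdiv : t / T = (ω s).toReal / Ω.toReal := by
      rw [← hφs]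
      simp only [hφdef]
      field_simp
    have hstep2 : ENNReal.ofReal (t / T) * Ω = ω s := by
      rw [htdiv, ENNReal.ofReal_div_of_pos hΩtR, ENNReal.ofReal_toReal (hωfin s hsIcc),
        ENNReal.ofReal_toReal hΩ, ENNReal.div_mul_cancel hΩ0 hΩ]
    rw [hstep1, ← hstep2]
end

section
/- Let (E,d) be a metric space, T > 0, p ≥ 1, and let X : [0,T] → E be a path of finite p-variation satisfying ‖X‖_{p-var;[0,t]}^p = (t/T)·‖X‖_{p-var;[0,T]}^p for all t ∈ [0,T]. Then X is (1/p)-Hölder continuous with d(X(s), X(t)) ≤ T^{−1/p}·‖X‖_{p-var;[0,T]}·(t − s)^{1/p} for all 0 ≤ s ≤ t ≤ T. -/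
open Set Filter
open scoped ENNReal NNReal Topology

/-- Extending a partition of `[0, s]` by the point `t`. -/
private lemma pVar_ext {E : Type*} [MetricSpace E] {p : ℝ} (hp0 : 0 < p) (X : ℝ → E)
    {s t : ℝ} (hst : s ≤ t) (n : ℕ) (u : Fin (n + 1) → ℝ) (hu : Monotone u)
    (h0 : u 0 = 0) (hlast : u (Fin.last n) = s) :
    (∑ i : Fin n, edist (X (u i.castSucc)) (X (u i.succ)) ^ p)
      + edist (X s) (X t) ^ p ≤ pVar p X 0 t ^ p := by
  set v : Fin (n + 2) → ℝ := Fin.snoc u t with hv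
  have hvmono : Monotone v := by
    refine Fin.monotone_iff_le_succ.2 fun i => ?_
    rcases eq_or_ne i (Fin.last n) with rfl | hne
    · rw [Fin.succ_last]
      simp only [v, Fin.snoc_castSucc, Fin.snoc_last, hlast]
      exact hst
    · obtain ⟨j, rfl⟩ := Fin.exists_castSucc_eq.2 hne
      rw [Fin.succ_castSucc]
      simp only [v, Fin.snoc_castSucc]
      exact hu (Fin.castSucc_le_succ j)
  have hv0 : v 0 = 0 := by
    have : (0 : Fin (n + 2)) = (0 : Fin (n + 1)).castSucc := by simp
    rw [this]; simp only [v, Fin.snoc_castSucc]; exact h0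
  have hvlast : v (Fin.last (n + 1)) = t := Fin.snoc_last _ _
  have hsum : ∑ i : Fin (n + 1), edist (X (v i.castSucc)) (X (v i.succ)) ^ p
      = (∑ i : Fin n, edist (X (u i.castSucc)) (X (u i.succ)) ^ p)
        + edist (X s) (X t) ^ p := by
    rw [Fin.sum_univ_castSucc]
    congr 1
    · refine Finset.sum_congr rfl fun j _ => ?_
      rw [Fin.succ_castSucc]
      simp only [v, Fin.snoc_castSucc]
    · rw [Fin.succ_last]
      simp only [v, Fin.snoc_castSucc, Fin.snoc_last, hlast]
  have hle : (∑ i : Fin (n + 1), edist (X (v i.castSucc)) (X (v i.succ)) ^ p) ^ (1 / p)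
      ≤ pVar p X 0 t := by
    refine le_iSup_of_le (n + 1) ?_
    refine le_iSup_of_le v ?_
    refine le_iSup_of_le hvmono ?_
    refine le_iSup_of_le hv0 ?_
    exact le_iSup_of_le hvlast le_rfl
  have := ENNReal.rpow_le_rpow hle hp0.le
  rwa [← ENNReal.rpow_mul, one_div_mul_cancel hp0.ne', ENNReal.rpow_one, hsum] at this

/-- a path of finite `p`-variation with linear `p`-variation control
`‖X‖_{p-var;[0,t]}^p = (t/T)·‖X‖_{p-var;[0,T]}^p` is `(1/p)`-Hölder continuous with
`d(X(s), X(t)) ≤ T^{-1/p}·‖X‖_{p-var;[0,T]}·(t − s)^{1/p}`. -/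
theorem holder_of_linear_control {E : Type*} [MetricSpace E]
    (T : ℝ) (hT : 0 < T) (p : ℝ) (hp : 1 ≤ p)
    (X : ℝ → E) (hfin : pVar p X 0 T ≠ ⊤)
    (hctrl : ∀ t ∈ Icc (0 : ℝ) T,
      pVar p X 0 t ^ p = ENNReal.ofReal (t / T) * pVar p X 0 T ^ p) :
    ∀ s t : ℝ, 0 ≤ s → s ≤ t → t ≤ T →
      dist (X s) (X t) ≤ T ^ (-(1 / p)) * (pVar p X 0 T).toReal * (t - s) ^ (1 / p) := by
  intro s t hs hst htT
  have hp0 : (0 : ℝ) < p := lt_of_lt_of_le one_pos hp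
  have hsT : s ≤ T := hst.trans htT
  set C : ℝ≥0∞ := pVar p X 0 T ^ p with hC
  have hCne : C ≠ ⊤ := ENNReal.rpow_ne_top_of_nonneg hp0.le hfin
  set e : ℝ≥0∞ := edist (X s) (X t) ^ p with he
  have hene : e ≠ ⊤ := ENNReal.rpow_ne_top_of_nonneg hp0.le (edist_ne_top _ _)
  -- e ≤ pVar p X 0 t ^ p, using the partition (0, s, t)
  have he_le : e ≤ pVar p X 0 t ^ p := by
    have hmono : Monotone (![0, s] : Fin 2 → ℝ) := by
      refine Fin.monotone_iff_le_succ.2 fun i => ?_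
      fin_cases i; simpa using hs
    have := pVar_ext hp0 X hst 1 ![0, s] hmono rfl rfl
    exact le_trans le_add_self this
  -- key superadditivity: pVar s ^ p + e ≤ pVar t ^ p
  have key : pVar p X 0 s ^ p + e ≤ pVar p X 0 t ^ p := by
    have hSR : pVar p X 0 s ≤ (pVar p X 0 t ^ p - e) ^ (1 / p) := by
      refine iSup_le fun n => iSup_le fun u => iSup_le fun hu => iSup_le fun h0 =>
        iSup_le fun hlast => ?_
      have hsum := pVar_ext hp0 X hst n u hu h0 hlast
      have hle : (∑ i : Fin n, edist (X (u i.castSucc)) (X (u i.succ)) ^ p)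
          ≤ pVar p X 0 t ^ p - e := ENNReal.le_sub_of_add_le_right hene hsum
      exact ENNReal.rpow_le_rpow hle (by positivity)
    have h1 : pVar p X 0 s ^ p ≤ pVar p X 0 t ^ p - e := by
      have := ENNReal.rpow_le_rpow hSR hp0.le
      rwa [← ENNReal.rpow_mul, one_div_mul_cancel hp0.ne', ENNReal.rpow_one] at this
    calc pVar p X 0 s ^ p + e ≤ (pVar p X 0 t ^ p - e) + e := add_le_add_left h1 e
      _ = pVar p X 0 t ^ p := tsub_add_cancel_of_le he_le
  -- use the control
  have ht' := hctrl t ⟨hs.trans hst, htT⟩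
  have hs' := hctrl s ⟨hs, hsT⟩
  have hsplit : ENNReal.ofReal (t / T) = ENNReal.ofReal (s / T) + ENNReal.ofReal ((t - s) / T) := by
    rw [← ENNReal.ofReal_add (div_nonneg hs hT.le)
      (div_nonneg (sub_nonneg.2 hst) hT.le)]
    congr 1
    field_simp
    ring
  rw [hs', ht', hsplit, add_mul] at key
  have hfin' : ENNReal.ofReal (s / T) * C ≠ ⊤ := ENNReal.mul_ne_top ENNReal.ofReal_ne_top hCne
  have he2 : e ≤ ENNReal.ofReal ((t - s) / T) * C := by
    rw [add_comm (ENNReal.ofReal (s / T) * C) e] at key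
    exact (ENNReal.add_le_add_iff_left hfin').1
      (by rwa [add_comm (ENNReal.ofReal (s / T) * C) e])
  -- take p-th roots
  have h3 : edist (X s) (X t) ≤ ENNReal.ofReal (((t - s) / T) ^ (1 / p)) * pVar p X 0 T := by
    have := ENNReal.rpow_le_rpow he2 (by positivity : (0:ℝ) ≤ 1 / p)
    rwa [he, ← ENNReal.rpow_mul, mul_one_div_cancel hp0.ne', ENNReal.rpow_one,
      ENNReal.mul_rpow_of_nonneg _ _ (by positivity : (0:ℝ) ≤ 1 / p),
      ENNReal.ofReal_rpow_of_nonneg (div_nonneg (sub_nonneg.2 hst) hT.le) (by positivity),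
      hC, ← ENNReal.rpow_mul, mul_one_div_cancel hp0.ne', ENNReal.rpow_one] at this
  have hfin2 : ENNReal.ofReal (((t - s) / T) ^ (1 / p)) * pVar p X 0 T ≠ ⊤ :=
    ENNReal.mul_ne_top ENNReal.ofReal_ne_top hfin
  calc dist (X s) (X t) = (edist (X s) (X t)).toReal := dist_edist _ _
    _ ≤ (ENNReal.ofReal (((t - s) / T) ^ (1 / p)) * pVar p X 0 T).toReal :=
        ENNReal.toReal_mono hfin2 h3
    _ = ((t - s) / T) ^ (1 / p) * (pVar p X 0 T).toReal := by
        rw [ENNReal.toReal_mul, ENNReal.toReal_ofReal (Real.rpow_nonneg (div_nonneg (sub_nonneg.2 hst) hT.le) _)]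
    _ = T ^ (-(1 / p)) * (pVar p X 0 T).toReal * (t - s) ^ (1 / p) := by
        rw [Real.div_rpow (sub_nonneg.2 hst) hT.le, Real.rpow_neg hT.le]
        ring
end

section
/- Let T > 0 and let γ : [0,T] → ℝ^d be a continuous path of finite 1-variation satisfying ‖γ‖_{1-var;[0,t]} = (t/T)·‖γ‖_{1-var;[0,T]} for all t ∈ [0,T] (constant-speed parameterisation). Then γ is Lipschitz, γ is differentiable at almost every t ∈ [0,T], and its derivative satisfies ‖γ′(t)‖ = ‖γ‖_{1-var;[0,T]}/T for almost every t ∈ [0,T]. -/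
open Set Filter MeasureTheory
open scoped ENNReal NNReal Topology

lemma pVar_one_eq_eVariationOn {E : Type*} [PseudoEMetricSpace E] (f : ℝ → E) {a b : ℝ}
    (hab : a ≤ b) : pVar 1 f a b = eVariationOn f (Icc a b) := by
  rw [pVar]
  simp only [ENNReal.rpow_one, one_div_one]
  apply le_antisymm
  · refine iSup_le fun n => iSup_le fun t => iSup_le fun ht => iSup_le fun h0 => iSup_le fun hl => ?_
    set u : ℕ → ℝ := fun i => t ⟨min i n, by omega⟩ with hu_def
    have hu : Monotone u := fun i j hij => ht (by simp only [Fin.mk_le_mk]; exact min_le_min hij le_rfl)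
    have hus : ∀ i, u i ∈ Icc a b := fun i =>
      ⟨h0 ▸ ht (Fin.zero_le _), hl ▸ ht (Fin.le_last _)⟩
    have : (∑ i : Fin n, edist (f (t i.castSucc)) (f (t i.succ)))
        = ∑ i ∈ Finset.range n, edist (f (u (i + 1))) (f (u i)) := by
      rw [Finset.sum_range fun i => edist (f (u (i+1))) (f (u i))]
      refine Finset.sum_congr rfl fun i _ => ?_
      have h1 : t i.castSucc = u i := by
        congr 1; ext; simp [hu_def, Nat.min_eq_left i.isLt.le]
      have h2 : t i.succ = u (i + 1) := by
        congr 1; ext; simp [hu_def, Nat.min_eq_left i.isLt]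
      rw [h1, h2, edist_comm]
    rw [this]
    exact eVariationOn.sum_le (f := f) (n := n) hu hus
  · refine iSup_le ?_
    rintro ⟨n, u, hu, hus⟩
    set v : ℕ → ℝ := fun i => if i = 0 then a else if i ≤ n + 1 then u (i - 1) else b with hv_def
    have hv0 : v 0 = a := by simp [hv_def]
    have hvmid : ∀ i, i ≤ n → v (i + 1) = u i := by
      intro i hi; simp [hv_def, Nat.succ_le_succ hi]
    have hvend : ∀ i, n + 2 ≤ i → v i = b := by
      intro i hi
      have h1 : i ≠ 0 := by omega
      have h2 : ¬ i ≤ n + 1 := by omega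
      simp [hv_def, h1, h2]
    have hv : Monotone v := by
      apply monotone_nat_of_le_succ
      intro i
      rcases Nat.eq_zero_or_pos i with rfl | hi
      · rw [hv0, hvmid 0 (Nat.zero_le _)]; exact (hus 0).1
      rcases le_or_gt (i + 1) (n + 1) with h | h
      · have hi' : i - 1 ≤ n := by omega
        rw [show v i = u (i - 1) by
            simp only [hv_def, if_neg (show ¬ i = 0 by omega), if_pos (show i ≤ n + 1 by omega)],
          hvmid i (by omega)]
        exact hu (by omega)
      rcases eq_or_lt_of_le (show n + 2 ≤ i + 1 by omega) with h2 | h2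
      · rw [hvend (i+1) (by omega)]
        rw [show v i = u (i - 1) by
          simp only [hv_def, if_neg (show ¬ i = 0 by omega), if_pos (show i ≤ n + 1 by omega)]]
        exact (hus (i-1)).2
      · rw [hvend i (by omega), hvend (i+1) (by omega)]
    set m := n + 2 with hm
    set t : Fin (m + 1) → ℝ := fun j => v j with ht_def
    have hmono : Monotone t := fun j k hjk => hv hjk
    have hta : t 0 = a := hv0
    have htb : t (Fin.last m) = b := hvend m le_rfl
    refine le_trans ?_ (le_iSup_of_le m <| le_iSup_of_le t <| le_iSup_of_le hmono <|
      le_iSup_of_le hta <| le_iSup_of_le htb le_rfl)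
    have hrhs : (∑ i : Fin m, edist (f (t i.castSucc)) (f (t i.succ)))
        = ∑ i ∈ Finset.range m, edist (f (v i)) (f (v (i + 1))) := by
      rw [Finset.sum_range fun i => edist (f (v i)) (f (v (i+1)))]
      exact Finset.sum_congr rfl fun i _ => rfl
    rw [hrhs]
    calc (∑ i ∈ Finset.range n, edist (f (u (i + 1))) (f (u i)))
        = ∑ i ∈ Finset.range n, edist (f (v (i+1))) (f (v (i+1+1))) := by
          refine Finset.sum_congr rfl fun i hi => ?_
          have hi' : i < n := Finset.mem_range.mp hi
          rw [hvmid i hi'.le, hvmid (i+1) hi', edist_comm]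
      _ = ∑ i ∈ Finset.Ico 1 (n + 1), edist (f (v i)) (f (v (i+1))) := by
          rw [Finset.sum_Ico_eq_sum_range]
          simp only [Nat.add_sub_cancel]
          exact Finset.sum_congr rfl fun i _ => by rw [Nat.add_comm 1 i]
      _ ≤ ∑ i ∈ Finset.range m, edist (f (v i)) (f (v (i + 1))) := by
          apply Finset.sum_le_sum_of_subset
          intro x hx
          simp only [Finset.mem_Ico] at hx
          exact Finset.mem_range.mpr (by omega)

lemma integral_deriv_le_of_monotone {f : ℝ → ℝ} (hf : Monotone f) (hc : Continuous f)
    {a b : ℝ} (hab : a ≤ b) : ∫ t in Ioc a b, deriv f t ≤ f b - f a := by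
  set μ := hf.stieltjesFunction.measure with hμ
  have hg : ∀ x, hf.stieltjesFunction x = f x := by
    intro x
    rw [hf.stieltjesFunction_eq]
    exact rightLim_eq_of_tendsto (hc.continuousAt.continuousWithinAt.tendsto)
  have hmeq : μ (Ioc a b) = ENNReal.ofReal (f b - f a) := by
    rw [StieltjesFunction.measure_Ioc, hg, hg]
  have h2 : ∀ᵐ x, deriv f x = (μ.rnDeriv volume x).toReal :=
    hf.ae_hasDerivAt.mono fun x hx => hx.deriv
  calc ∫ t in Ioc a b, deriv f t = ∫ t in Ioc a b, (μ.rnDeriv volume t).toReal :=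
        integral_congr_ae (ae_restrict_of_ae h2)
    _ ≤ (μ (Ioc a b)).toReal :=
        Measure.setIntegral_toReal_rnDeriv_le (by rw [hmeq]; exact ENNReal.ofReal_ne_top)
    _ = f b - f a := by
        rw [hmeq, ENNReal.toReal_ofReal (by simpa using hf hab)]

lemma norm_deriv_le_of_lipschitzWith {E : Type*} [NormedAddCommGroup E] [NormedSpace ℝ E]
    {f : ℝ → E} {K : ℝ≥0} (hf : LipschitzWith K f) (x : ℝ) : ‖deriv f x‖ ≤ K := by
  by_cases h : DifferentiableAt ℝ f x
  · have ht := hasDerivAt_iff_tendsto_slope.mp h.hasDerivAt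
    refine le_of_tendsto ht.norm ?_
    filter_upwards [self_mem_nhdsWithin] with y (hy : y ≠ x)
    rw [slope_def_module, norm_smul, norm_inv, Real.norm_eq_abs]
    have h1 : ‖f y - f x‖ ≤ K * |y - x| := by
      have := hf.dist_le_mul y x
      rwa [dist_eq_norm, Real.dist_eq] at this
    have h2 : (0:ℝ) < |y - x| := abs_pos.mpr (sub_ne_zero.mpr hy)
    rw [inv_mul_le_iff₀ h2]
    calc ‖f y - f x‖ ≤ K * |y - x| := h1
      _ ≤ |y - x| * K := by rw [mul_comm]
  · rw [deriv_zero_of_not_differentiableAt h]; simp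

/-- a continuous path `γ : [0,T] → ℝ^d` of finite `1`-variation, parameterised
at constant speed (`‖γ‖_{1-var;[0,t]} = (t/T)·‖γ‖_{1-var;[0,T]}`), is Lipschitz on `[0,T]`,
differentiable at almost every `t ∈ [0,T]`, with `‖γ′(t)‖ = ‖γ‖_{1-var;[0,T]}/T` a.e. -/
theorem constant_speed_lipschitz_ae_deriv {d : ℕ}
    (T : ℝ) (hT : 0 < T) (γ : ℝ → EuclideanSpace ℝ (Fin d))
    (hcont : ContinuousOn γ (Icc 0 T)) (hfin : pVar 1 γ 0 T ≠ ⊤)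
    (hcs : ∀ t ∈ Icc (0 : ℝ) T,
      pVar 1 γ 0 t = ENNReal.ofReal (t / T) * pVar 1 γ 0 T) :
    (∃ K : ℝ≥0, LipschitzOnWith K γ (Icc 0 T)) ∧
    (∀ᵐ t ∂(volume.restrict (Icc (0 : ℝ) T)),
      DifferentiableWithinAt ℝ γ (Icc 0 T) t ∧
      ‖derivWithin γ (Icc 0 T) t‖ = (pVar 1 γ 0 T).toReal / T) := by
  classical
  set V := eVariationOn γ (Icc 0 T) with hVdef
  have hpV : pVar 1 γ 0 T = V := pVar_one_eq_eVariationOn γ hT.le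
  have hVfin : V ≠ ⊤ := hpV ▸ hfin
  have hcs' : ∀ t ∈ Icc (0:ℝ) T, eVariationOn γ (Icc 0 t) = ENNReal.ofReal (t/T) * V := by
    intro t ht
    rw [← pVar_one_eq_eVariationOn γ ht.1, hcs t ht, hpV]
  set L : ℝ := V.toReal / T with hLdef
  have hL0 : 0 ≤ L := div_nonneg ENNReal.toReal_nonneg hT.le
  set K : ℝ≥0 := ⟨L, hL0⟩ with hKdef
  have hKL : (K : ℝ) = L := rfl
  -- variation over subintervals
  have hsub : ∀ s t : ℝ, 0 ≤ s → s ≤ t → t ≤ T →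
      eVariationOn γ (Icc s t) = ENNReal.ofReal ((t - s)/T) * V := by
    intro s t hs hst htT
    have h1 := eVariationOn.Icc_add_Icc γ (s := univ) hs hst (mem_univ s)
    simp only [univ_inter] at h1
    rw [hcs' s ⟨hs, hst.trans htT⟩, hcs' t ⟨hs.trans hst, htT⟩] at h1
    have h2 : ENNReal.ofReal (t/T) * V
        = ENNReal.ofReal (s/T) * V + ENNReal.ofReal ((t-s)/T) * V := by
      rw [← add_mul, ← ENNReal.ofReal_add (div_nonneg hs hT.le) (div_nonneg (by linarith) hT.le)]
      congr 2
      field_simp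
      ring
    rw [h2] at h1
    exact (ENNReal.add_right_inj
      (ENNReal.mul_ne_top ENNReal.ofReal_ne_top hVfin)).mp h1
  -- Lipschitz
  have hlip : LipschitzOnWith K γ (Icc 0 T) := by
    intro x hx y hy
    wlog hxy : x ≤ y generalizing x y
    · rw [edist_comm, edist_comm x y]; exact this hy hx (le_of_not_ge hxy)
    have h1 : edist (γ x) (γ y) ≤ eVariationOn γ (Icc x y) :=
      eVariationOn.edist_le γ ⟨le_rfl, hxy⟩ ⟨hxy, le_rfl⟩
    rw [hsub x y hx.1 hxy hy.2] at h1
    refine h1.trans ?_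
    have hedist : edist x y = ENNReal.ofReal (y - x) := by
      rw [edist_dist, Real.dist_eq, abs_sub_comm, abs_of_nonneg (by linarith)]
    have hK' : (K : ℝ≥0∞) = ENNReal.ofReal L := (ENNReal.ofReal_eq_coe_nnreal hL0).symm
    rw [hedist, hK', (ENNReal.ofReal_toReal hVfin).symm,
      ← ENNReal.ofReal_mul (div_nonneg (by linarith) hT.le), ← ENNReal.ofReal_mul hL0]
    exact ENNReal.ofReal_le_ofReal (le_of_eq (by rw [hLdef]; field_simp))
  refine ⟨⟨K, hlip⟩, ?_⟩
  -- extension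
  set γt : ℝ → EuclideanSpace ℝ (Fin d) := fun t => γ (projIcc 0 T hT.le t) with hγtdef
  have hγtlip : LipschitzWith K γt := by
    have h2 := (hlip.to_restrict).comp (LipschitzWith.projIcc hT.le)
    rw [mul_one] at h2
    exact h2
  have hγteq : ∀ x ∈ Icc (0:ℝ) T, γt x = γ x := fun x hx => by
    rw [hγtdef]; simp [projIcc_of_mem hT.le hx]
  set ρ : ℝ → ℝ := fun t => ‖deriv γt t‖ with hρdef
  have hρle : ∀ t, ρ t ≤ L := fun t => norm_deriv_le_of_lipschitzWith hγtlip t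
  have hρ0 : ∀ t, 0 ≤ ρ t := fun t => norm_nonneg _
  have hρmeas : Measurable ρ := (measurable_deriv γt).norm
  have hρint : ∀ (s : Set ℝ), volume s < ⊤ → IntegrableOn ρ s := by
    intro s hvs
    refine Integrable.mono' (g := fun _ => L) ((integrableOn_const_iff).mpr (Or.inr hvs))
      hρmeas.aestronglyMeasurable.restrict (ae_of_all _ fun t => ?_)
    rw [Real.norm_eq_abs, abs_of_nonneg (hρ0 t)]
    exact hρle t
  -- displacement bounded by integral of ρ
  have hkey : ∀ u v : ℝ, 0 ≤ u → u ≤ v → v ≤ T → ‖γ v - γ u‖ ≤ ∫ t in Ioc u v, ρ t := by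
    intro u v hu huv hvT
    rcases eq_or_ne (γ v) (γ u) with h | h
    · rw [h, sub_self, norm_zero]
      exact setIntegral_nonneg measurableSet_Ioc fun t _ => hρ0 t
    set w : EuclideanSpace ℝ (Fin d) := γ v - γ u with hwdef
    have hw : ‖w‖ ≠ 0 := by
      simp only [hwdef, norm_ne_zero_iff, sub_ne_zero]
      exact h
    set e : EuclideanSpace ℝ (Fin d) := ‖w‖⁻¹ • w with hedef
    have he : ‖e‖ = 1 := by
      rw [hedef, norm_smul, norm_inv, Real.norm_eq_abs, abs_of_nonneg (norm_nonneg w),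
        inv_mul_cancel₀ hw]
    have hip : ∀ x : EuclideanSpace ℝ (Fin d), (inner ℝ e x : ℝ) ≤ ‖x‖ := by
      intro x
      calc (inner ℝ e x : ℝ) ≤ ‖e‖ * ‖x‖ := real_inner_le_norm e x
        _ = ‖x‖ := by rw [he, one_mul]
    set f : ℝ → ℝ := fun t => L * t - (inner ℝ e (γt t) : ℝ) with hfdef
    have hfm : Monotone f := by
      intro s t hst
      have h1 : (inner ℝ e (γt t) : ℝ) - (inner ℝ e (γt s) : ℝ) ≤ ‖γt t - γt s‖ := by
        rw [← inner_sub_right]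
        exact hip _
      have h2 : ‖γt t - γt s‖ ≤ L * (t - s) := by
        have h3 := hγtlip.dist_le_mul t s
        rw [dist_eq_norm, Real.dist_eq, hKL, abs_of_nonneg (by linarith)] at h3
        exact h3
      simp only [hfdef]
      nlinarith
    have hfc : Continuous f :=
      (continuous_const.mul continuous_id).sub (continuous_const.inner hγtlip.continuous)
    have hM := integral_deriv_le_of_monotone hfm hfc huv
    -- identify deriv f a.e.
    have hae : ∀ᵐ t : ℝ, deriv f t = L - (inner ℝ e (deriv γt t) : ℝ) := by
      filter_upwards [hγtlip.ae_differentiableAt_real] with t ht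
      have h1 : HasDerivAt (fun s => (inner ℝ e (γt s) : ℝ)) (inner ℝ e (deriv γt t) : ℝ) t := by
        have := HasDerivAt.inner ℝ (hasDerivAt_const t e) ht.hasDerivAt
        simpa using this
      have h2 : HasDerivAt f (L - (inner ℝ e (deriv γt t) : ℝ)) t := by
        have h3 : HasDerivAt (fun s : ℝ => L * s) L t := by
          simpa using (hasDerivAt_id t).const_mul L
        exact h3.sub h1
      exact h2.deriv
    have hinnerint : IntegrableOn (fun t => (inner ℝ e (deriv γt t) : ℝ)) (Ioc u v) := by
      refine Integrable.mono' (g := fun _ => L)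
        ((integrableOn_const_iff).mpr (Or.inr (by rw [Real.volume_Ioc]; exact ENNReal.ofReal_lt_top)))
        ((Measurable.inner measurable_const (measurable_deriv γt)).aestronglyMeasurable.restrict)
        (ae_of_all _ fun t => ?_)
      rw [Real.norm_eq_abs]
      refine (abs_real_inner_le_norm e _).trans ?_
      rw [he, one_mul]
      exact hρle t
    have hρintuv : IntegrableOn ρ (Ioc u v) :=
      hρint _ (by rw [Real.volume_Ioc]; exact ENNReal.ofReal_lt_top)
    have hvol : (volume (Ioc u v)).toReal = v - u := by
      rw [Real.volume_Ioc, ENNReal.toReal_ofReal (by linarith)]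
    have hconstint : IntegrableOn (fun _ : ℝ => L) (Ioc u v) :=
      (integrableOn_const_iff).mpr (Or.inr (by rw [Real.volume_Ioc]; exact ENNReal.ofReal_lt_top))
    have hIeq : ∫ t in Ioc u v, deriv f t
        = L * (v - u) - ∫ t in Ioc u v, (inner ℝ e (deriv γt t) : ℝ) := by
      rw [integral_congr_ae (ae_restrict_of_ae hae), integral_sub hconstint hinnerint,
        setIntegral_const, measureReal_def, hvol, smul_eq_mul, mul_comm]
    have hfveq : f v - f u = L * (v - u) - ‖w‖ := by
      have hiw : (inner ℝ e w : ℝ) = ‖w‖ := by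
        rw [hedef, real_inner_smul_left, real_inner_self_eq_norm_mul_norm]
        field_simp
      rw [hfdef]
      simp only
      rw [hγteq v ⟨hu.trans huv, hvT⟩, hγteq u ⟨hu, huv.trans hvT⟩]
      have : (inner ℝ e (γ v) : ℝ) - (inner ℝ e (γ u) : ℝ) = (inner ℝ e w : ℝ) := by
        rw [hwdef, inner_sub_right]
      nlinarith [this, hiw]
    rw [hIeq, hfveq] at hM
    have h5 : ‖w‖ ≤ ∫ t in Ioc u v, (inner ℝ e (deriv γt t) : ℝ) := by linarith
    refine h5.trans (setIntegral_mono hinnerint hρintuv fun t => hip _)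
  -- variation bounded by the integral of ρ
  set I : ℝ := ∫ t in Icc 0 T, ρ t with hIdef
  have hIccint : IntegrableOn ρ (Icc 0 T) := hρint _ (by rw [Real.volume_Icc]; exact ENNReal.ofReal_lt_top)
  have hVI : V ≤ ENNReal.ofReal I := by
    rw [hVdef]
    refine iSup_le ?_
    rintro ⟨n, u, hu, hus⟩
    have hinterval : ∀ i, IntervalIntegrable ρ volume (u i) (u (i + 1)) := by
      intro i
      rw [intervalIntegrable_iff]
      exact hρint _ measure_Ioc_lt_top
    calc (∑ i ∈ Finset.range n, edist (γ (u (i + 1))) (γ (u i)))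
        = ENNReal.ofReal (∑ i ∈ Finset.range n, ‖γ (u (i + 1)) - γ (u i)‖) := by
          rw [ENNReal.ofReal_sum_of_nonneg (fun i _ => norm_nonneg _)]
          exact Finset.sum_congr rfl fun i _ => by rw [edist_dist, dist_eq_norm]
      _ ≤ ENNReal.ofReal I := ?_
    apply ENNReal.ofReal_le_ofReal
    have hsum1 : (∑ i ∈ Finset.range n, ‖γ (u (i + 1)) - γ (u i)‖)
        ≤ ∑ i ∈ Finset.range n, ∫ t in Ioc (u i) (u (i + 1)), ρ t :=
      Finset.sum_le_sum fun i _ =>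
        hkey (u i) (u (i + 1)) (hus i).1 (hu (Nat.le_succ i)) (hus (i + 1)).2
    have hsum2 : (∑ i ∈ Finset.range n, ∫ t in Ioc (u i) (u (i + 1)), ρ t)
        = ∫ t in Ioc (u 0) (u n), ρ t := by
      have h1 : ∀ i ∈ Finset.range n, (∫ t in Ioc (u i) (u (i + 1)), ρ t)
          = ∫ t in (u i)..(u (i + 1)), ρ t := fun i _ =>
        (intervalIntegral.integral_of_le (hu (Nat.le_succ i))).symm
      rw [Finset.sum_congr rfl h1,
        intervalIntegral.sum_integral_adjacent_intervals fun i _ => hinterval i,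
        intervalIntegral.integral_of_le (hu (Nat.zero_le n))]
    rw [hsum2] at hsum1
    refine hsum1.trans (setIntegral_mono_set hIccint (ae_of_all _ hρ0) ?_)
    exact HasSubset.Subset.eventuallyLE (Ioc_subset_Icc_self.trans
      (Icc_subset_Icc (hus 0).1 (hus n).2))
  -- integral of ρ equals L * T, hence ρ = L a.e.
  have hconstIcc : IntegrableOn (fun _ : ℝ => L) (Icc 0 T) :=
    (integrableOn_const_iff).mpr (Or.inr measure_Icc_lt_top)
  have hvolIcc : (volume (Icc (0:ℝ) T)).toReal = T := by
    rw [Real.volume_Icc, ENNReal.toReal_ofReal (by linarith)]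
    ring
  have hIle : I ≤ L * T := by
    calc I ≤ ∫ _ in Icc (0:ℝ) T, L := setIntegral_mono hIccint hconstIcc fun t => hρle t
      _ = L * T := by rw [setIntegral_const, measureReal_def, hvolIcc, smul_eq_mul, mul_comm]
  have hLT : L * T = V.toReal := by rw [hLdef]; field_simp
  have hI0 : 0 ≤ I := setIntegral_nonneg measurableSet_Icc fun t _ => hρ0 t
  have hIge : V.toReal ≤ I := by
    have h1 := (ENNReal.toReal_le_toReal hVfin ENNReal.ofReal_ne_top).mpr hVI
    rwa [ENNReal.toReal_ofReal hI0] at h1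
  have hIeq : I = V.toReal := le_antisymm (hIle.trans_eq hLT) hIge
  have hzero : ∫ t in Icc (0:ℝ) T, (L - ρ t) = 0 := by
    rw [integral_sub hconstIcc hIccint, setIntegral_const, measureReal_def, hvolIcc, smul_eq_mul, mul_comm,
      ← hIdef, hIeq, hLT, sub_self]
  have haeeq : (fun t => L - ρ t) =ᵐ[volume.restrict (Icc (0:ℝ) T)] 0 :=
    (integral_eq_zero_iff_of_nonneg (fun t => by simpa using hρle t)
      (hconstIcc.sub hIccint)).mp hzero
  -- conclusion
  have hne : ∀ᵐ t : ℝ, t ≠ 0 ∧ t ≠ T := by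
    have h0 : ∀ᵐ t : ℝ, t ≠ (0:ℝ) := by
      simpa using measure_eq_zero_iff_ae_notMem.mp (measure_singleton (0:ℝ))
    have h1 : ∀ᵐ t : ℝ, t ≠ T := by
      simpa using measure_eq_zero_iff_ae_notMem.mp (measure_singleton T)
    exact h0.and h1
  filter_upwards [ae_restrict_mem measurableSet_Icc,
    ae_restrict_of_ae hγtlip.ae_differentiableAt_real, haeeq, ae_restrict_of_ae hne]
    with t htmem htdiff hteq htne
  have htIoo : t ∈ Ioo (0:ℝ) T := ⟨htmem.1.lt_of_ne' htne.1, htmem.2.lt_of_ne htne.2⟩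
  have hnhds : Icc (0:ℝ) T ∈ 𝓝 t := Icc_mem_nhds htIoo.1 htIoo.2
  have heqev : γ =ᶠ[𝓝 t] γt := eventually_of_mem hnhds fun x hx => (hγteq x hx).symm
  have hdiffγ : DifferentiableAt ℝ γ t := htdiff.congr_of_eventuallyEq heqev
  refine ⟨hdiffγ.differentiableWithinAt, ?_⟩
  rw [derivWithin_of_mem_nhds hnhds, heqev.deriv_eq, hpV]
  have h2 : L - ρ t = 0 := hteq
  show ρ t = V.toReal / T
  rw [hLdef] at h2
  linarith
end
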